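/- Let u ∈ U and let S = {u' ∈ U : θ_{u'} < θ_u} be the set of vertices with strictly smaller tip number. Then the number of butterflies containing u in the subgraph induced on (U \ S) ∪ V is at least θ_u. -/
import Mathlib


open Finset

variable {α β : Type*} [Fintype α] [Fintype β] [DecidableEq α] [DecidableEq β]

/-- Neighborhood (in the `V` side) of a `U`-side vertex, for bipartite adjacency `A`. -/
def nbrU (A : α → β → Prop) [∀ u v, Decidable (A u v)] (u : α) : Finset β :=
  univ.filter (fun v => A u v)

/-- Neighborhood (in the `U` side) of a `V`-side vertex. -/
def nbrV (A : α → β → Prop) [∀ u v, Decidable (A u v)] (v : β) : Finset α :=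
  univ.filter (fun u => A u v)

/-- A butterfly (2,2-biclique): a pair of a 2-subset of `U` and a 2-subset of `V`
with all four cross edges present. -/
def butterflies (A : α → β → Prop) [∀ u v, Decidable (A u v)] : Finset (Finset α × Finset β) :=
  univ.filter (fun p => p.1.card = 2 ∧ p.2.card = 2 ∧ ∀ u ∈ p.1, ∀ v ∈ p.2, A u v)

/-- Number of butterflies containing the `U`-vertex `u`. -/
def btfCount (A : α → β → Prop) [∀ u v, Decidable (A u v)] (u : α) : ℕ :=
  ((butterflies A).filter (fun p => u ∈ p.1)).card

/-- Number of butterflies containing both `U`-vertices `u` and `u'`. -/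
def btfCountPair (A : α → β → Prop) [∀ u v, Decidable (A u v)] (u u' : α) : ℕ :=
  ((butterflies A).filter (fun p => u ∈ p.1 ∧ u' ∈ p.1)).card

/-- Butterflies of the subgraph induced on `S ∪ V`. -/
def butterfliesIn (A : α → β → Prop) [∀ u v, Decidable (A u v)] (S : Finset α) :
    Finset (Finset α × Finset β) :=
  (butterflies A).filter (fun p => p.1 ⊆ S)

/-- Number of butterflies containing `u` in the subgraph induced on `S ∪ V`. -/
def btfCountIn (A : α → β → Prop) [∀ u v, Decidable (A u v)] (S : Finset α) (u : α) : ℕ :=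
  ((butterfliesIn A S).filter (fun p => u ∈ p.1)).card

/-- Wedges with both endpoints in `U`: a 2-subset of `U` together with a common neighbor. -/
def wedges (A : α → β → Prop) [∀ u v, Decidable (A u v)] : Finset (Finset α × β) :=
  univ.filter (fun p => p.1.card = 2 ∧ ∀ u ∈ p.1, A u p.2)

/-- Two `U`-vertices are connected by a series of butterflies within the subgraph induced
on `S ∪ V`. -/
def btfConnected (A : α → β → Prop) [∀ u v, Decidable (A u v)] (S : Finset α) : α → α → Prop :=
  Relation.ReflTransGen (fun a b => ∃ p ∈ butterfliesIn A S, a ∈ p.1 ∧ b ∈ p.1)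

/-- The two defining conditions of a `k`-tip (before maximality): every vertex of `S` has at
least `k` butterflies in the induced subgraph, and `S` is butterfly-connected. -/
def tipCond (A : α → β → Prop) [∀ u v, Decidable (A u v)] (k : ℕ) (S : Finset α) : Prop :=
  (∀ u ∈ S, k ≤ btfCountIn A S u) ∧ ∀ u1 ∈ S, ∀ u2 ∈ S, btfConnected A S u1 u2

/-- A `k`-tip: a maximal set satisfying the `k`-tip conditions. -/
def kTip (A : α → β → Prop) [∀ u v, Decidable (A u v)] (k : ℕ) (S : Finset α) : Prop :=
  tipCond A k S ∧ ∀ S', S ⊆ S' → tipCond A k S' → S' = S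

/-- The tip number of `u`: the largest `k` such that `u` lies in some `k`-tip. -/
noncomputable def tipNumber (A : α → β → Prop) [∀ u v, Decidable (A u v)] (u : α) : ℕ :=
  sSup {k : ℕ | ∃ S, kTip A k S ∧ u ∈ S}

lemma btfCountIn_mono (A : α → β → Prop) [∀ u v, Decidable (A u v)] {S T : Finset α}
    (hST : S ⊆ T) (u : α) : btfCountIn A S u ≤ btfCountIn A T u := by
  apply card_le_card
  intro p hp
  simp only [btfCountIn, butterfliesIn, mem_filter] at *
  exact ⟨⟨hp.1.1, hp.1.2.trans hST⟩, hp.2⟩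

lemma btfCountIn_le (A : α → β → Prop) [∀ u v, Decidable (A u v)] (S : Finset α) (u : α) :
    btfCountIn A S u ≤ Fintype.card (Finset α × Finset β) :=
  (card_le_card (filter_subset _ _)).trans (card_le_card (filter_subset _ _)) |>.trans
    ((card_le_card (filter_subset _ _)).trans_eq rfl)

lemma tipSet_bdd (A : α → β → Prop) [∀ u v, Decidable (A u v)] (u : α) :
    BddAbove {k : ℕ | ∃ S, kTip A k S ∧ u ∈ S} := by
  refine ⟨Fintype.card (Finset α × Finset β), fun k hk => ?_⟩
  obtain ⟨S, hS, hu⟩ := hk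
  exact (hS.1.1 u hu).trans (btfCountIn_le A S u)

/-- with `S` the set of vertices of strictly smaller tip number than `u`,
the butterfly count of `u` in the subgraph induced on `(U \\ S) ∪ V` is at least `θ_u`. -/
theorem stmt16 (A : α → β → Prop) [∀ u v, Decidable (A u v)] (u : α) :
    tipNumber A u ≤
      btfCountIn A
        (univ \ (univ.filter (fun u' => tipNumber A u' < tipNumber A u))) u := by
  set k := tipNumber A u with hk
  rcases Nat.eq_zero_or_pos k with h0 | hpos
  · simp [h0]
  have hmem : k ∈ {k : ℕ | ∃ S, kTip A k S ∧ u ∈ S} := by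
    have hne : {k : ℕ | ∃ S, kTip A k S ∧ u ∈ S}.Nonempty := by
      by_contra h
      rw [Set.not_nonempty_iff_eq_empty] at h
      simp [hk, tipNumber, h] at hpos
    exact Nat.sSup_mem hne (tipSet_bdd A u)
  obtain ⟨H, hH, huH⟩ := hmem
  have hsub : H ⊆ univ \ (univ.filter (fun u' => tipNumber A u' < tipNumber A u)) := by
    intro u' hu'
    simp only [mem_sdiff, mem_filter, mem_univ, true_and, not_lt]
    have : k ∈ {k : ℕ | ∃ S, kTip A k S ∧ u' ∈ S} := ⟨H, hH, hu'⟩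
    exact le_csSup (tipSet_bdd A u') this
  exact (hH.1.1 u huH).trans (btfCountIn_mono A hsub u)
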